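/- arXiv:1703.06489 — 11 statements merged into one kernel-verified Lean document; each statement's English description precedes it below -/
import Mathlib

section
/- Let G be a finite group, ω a normalized 3-cocycle on G with values in ℂˣ, and g ∈ G. Then for all x, y in the centralizer C_G(g) = {h ∈ G : hg = gh}, one has γ_g(x,y) = θ_g(x,y). -/
/-- Right conjugation `g^x = x⁻¹ * g * x`. -/
def groupConj {G : Type*} [Group G] (g x : G) : G := x⁻¹ * g * x

/-- `ω : G × G × G → ℂˣ` is a normalized multiplicative 3-cocycle. -/
def IsNormalized3Cocycle {G : Type*} [Group G] (ω : G → G → G → ℂˣ) : Prop :=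
  (∀ a b c d : G, ω b c d * ω a (b * c) d * ω a b c = ω (a * b) c d * ω a b (c * d)) ∧
  (∀ a b c : G, a = 1 ∨ b = 1 ∨ c = 1 → ω a b c = 1)

/-- `θ_g(x,y) = ω(g,x,y)·ω(x,y,g^{xy})·ω(x,g^x,y)⁻¹`. -/
def thetaDPR {G : Type*} [Group G] (ω : G → G → G → ℂˣ) (g x y : G) : ℂˣ :=
  ω g x y * ω x y (groupConj g (x * y)) * (ω x (groupConj g x) y)⁻¹

/-- `γ_x(a,b) = ω(a,b,x)·ω(x,a^x,b^x)·ω(a,x,b^x)⁻¹`. -/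
def gammaDPR {G : Type*} [Group G] (ω : G → G → G → ℂˣ) (x a b : G) : ℂˣ :=
  ω a b x * ω x (groupConj a x) (groupConj b x) * (ω a x (groupConj b x))⁻¹

/-- On the centralizer of `g`, the 2-cochains `γ_g` and `θ_g` coincide. -/
theorem gamma_eq_theta_on_centralizer {G : Type*} [Group G] [Finite G]
    (ω : G → G → G → ℂˣ) (hω : IsNormalized3Cocycle ω) (g : G) :
    ∀ x y : G, x * g = g * x → y * g = g * y →
      gammaDPR ω g x y = thetaDPR ω g x y := by
  intro x y hx hy
  have h1 : groupConj x g = x := by rw [groupConj, mul_assoc, hx, inv_mul_cancel_left]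
  have h2 : groupConj y g = y := by rw [groupConj, mul_assoc, hy, inv_mul_cancel_left]
  have h3 : groupConj g x = g := by rw [groupConj, mul_assoc, ← hx, inv_mul_cancel_left]
  have hxy : x * y * g = g * (x * y) := by
    rw [mul_assoc, hy, ← mul_assoc, hx, mul_assoc]
  have h4 : groupConj g (x * y) = g := by
    rw [groupConj, mul_assoc, ← hxy, ← mul_assoc, inv_mul_cancel, one_mul]
  rw [gammaDPR, thetaDPR, h1, h2, h3, h4, mul_comm (ω x y g) (ω g x y)]
end

section
/- Let G be a finite group, ω a normalized 3-cocycle on G with values in ℂˣ, and g ∈ G. Then the restriction of θ_g to the centralizer C_G(g) = {h ∈ G : hg = gh} is a 2-cocycle: for all x, y, z ∈ C_G(g), θ_g(x,y)·θ_g(xy,z) = θ_g(y,z)·θ_g(x,yz). -/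
/-- The restriction of `θ_g` to the centralizer `C_G(g)` is a 2-cocycle. -/
theorem theta_is_two_cocycle_on_centralizer {G : Type*} [Group G] [Finite G]
    (ω : G → G → G → ℂˣ) (hω : IsNormalized3Cocycle ω) (g : G) :
    ∀ x y z : G, x * g = g * x → y * g = g * y → z * g = g * z →
      thetaDPR ω g x y * thetaDPR ω g (x * y) z =
        thetaDPR ω g y z * thetaDPR ω g x (y * z) := by
  intro x y z hx hy hz
  obtain ⟨h1, _⟩ := hω
  have cg : ∀ a : G, a * g = g * a → groupConj g a = g := by
    intro a h
    simp only [groupConj, mul_assoc, ← h]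
    simp
  have hxy : (x * y) * g = g * (x * y) := by
    rw [mul_assoc, hy, ← mul_assoc, hx, mul_assoc]
  have hyz : (y * z) * g = g * (y * z) := by
    rw [mul_assoc, hz, ← mul_assoc, hy, mul_assoc]
  have hxyz : (x * y * z) * g = g * (x * y * z) := by
    rw [mul_assoc, hz, ← mul_assoc, hxy, mul_assoc]
  have hxyz' : (x * (y * z)) * g = g * (x * (y * z)) := by
    rw [mul_assoc, hyz, ← mul_assoc, hx, mul_assoc]
  simp only [thetaDPR, cg x hx, cg y hy, cg z hz, cg (x*y) hxy, cg (y*z) hyz,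
    cg (x*y*z) hxyz, cg (x*(y*z)) hxyz']
  have A := h1 g x y z
  have B := h1 x g y z
  have C := h1 x y g z
  have D := h1 x y z g
  simp only [hx] at B
  simp only [hy] at C
  simp only [hz] at D
  have vA := congrArg Units.val A
  have vB := congrArg Units.val B
  have vC := congrArg Units.val C
  have vD := congrArg Units.val D
  simp only [Units.val_mul] at vA vB vC vD
  -- the key monomial identity in ℂ
  have hm : ((ω x y z : ℂ) * (ω (g*x) y z : ℂ) * (ω x (g*y) z : ℂ) * (ω x y (g*z) : ℂ)) ≠ 0 :=
    mul_ne_zero (mul_ne_zero (mul_ne_zero (Units.ne_zero _) (Units.ne_zero _))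
      (Units.ne_zero _)) (Units.ne_zero _)
  have key : (ω g x y : ℂ) * (ω x y g : ℂ) * (ω g (x*y) z : ℂ) * (ω (x*y) z g : ℂ) *
      (ω y g z : ℂ) * (ω x g (y*z) : ℂ) =
      (ω g y z : ℂ) * (ω y z g : ℂ) * (ω g x (y*z) : ℂ) * (ω x (y*z) g : ℂ) *
      (ω x g y : ℂ) * (ω (x*y) g z : ℂ) := by
    apply mul_left_cancel₀ hm
    linear_combination
      ((ω y g z : ℂ) * (ω x (g*y) z : ℂ) * (ω x y g : ℂ)) *
        ((ω (g*x) y z : ℂ) * (ω x g (y*z) : ℂ)) * ((ω (x*y) z g : ℂ) * (ω x y (g*z) : ℂ)) * vA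
      - ((ω (g*x) y z : ℂ) * (ω g x (y*z) : ℂ)) * ((ω (x*y) g z : ℂ) * (ω x y (g*z) : ℂ)) *
        ((ω (x*y) z g : ℂ) * (ω x y (g*z) : ℂ)) * vB
      + ((ω (g*x) y z : ℂ) * (ω g x (y*z) : ℂ)) * ((ω (g*x) y z : ℂ) * (ω x g (y*z) : ℂ)) *
        ((ω (x*y) z g : ℂ) * (ω x y (g*z) : ℂ)) * vC
      - ((ω (g*x) y z : ℂ) * (ω g x (y*z) : ℂ)) * ((ω (x*y) g z : ℂ) * (ω x y (g*z) : ℂ)) *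
        ((ω g y z : ℂ) * (ω x (g*y) z : ℂ) * (ω x g y : ℂ)) * vD
  -- rewrite commuted products in key
  apply Units.ext
  simp only [Units.val_mul, Units.val_inv_eq_inv_val]
  field_simp
  linear_combination key
end

section
/- Let G be a finite group and ω a normalized 3-cocycle on G with values in ℂˣ. Then for all g, x, y, z ∈ G one has the twisted 2-cocycle identity θ_g(x,y)·θ_g(xy,z) = θ_{g^x}(y,z)·θ_g(x,yz). (This identity is what makes the multiplication of the twisted quantum double D^ω(G) associative.) -/
/-- The twisted 2-cocycle identity for `θ`, giving associativity of `D^ω(G)`. -/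
theorem theta_twisted_two_cocycle {G : Type*} [Group G] [Finite G]
    (ω : G → G → G → ℂˣ) (hω : IsNormalized3Cocycle ω) :
    ∀ g x y z : G,
      thetaDPR ω g x y * thetaDPR ω g (x * y) z =
        thetaDPR ω (groupConj g x) y z * thetaDPR ω g x (y * z) := by
  intro g x y z
  obtain ⟨hc, -⟩ := hω
  have hA := hc g x y z
  have hB := hc x (groupConj g x) y z
  have hC := hc x y (groupConj g (x*y)) z
  have hD := hc x y z (groupConj g (x*y*z))
  simp only [thetaDPR, groupConj, mul_inv_rev, mul_assoc, inv_mul_cancel_left,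
    mul_inv_cancel_left] at hA hB hC hD ⊢
  have key :
      (ω g x y *
        (ω x y (y⁻¹ * (x⁻¹ * (g * (x * y)))) *
          ((ω x (x⁻¹ * (g * x)) y)⁻¹ *
            (ω g (x * y) z *
              (ω (x * y) z (z⁻¹ * (y⁻¹ * (x⁻¹ * (g * (x * (y * z)))))) *
                (ω (x * y) (y⁻¹ * (x⁻¹ * (g * (x * y)))) z)⁻¹))))) *
        ((ω (g * x) y z * ω g x (y * z)) *
          ((ω (x⁻¹ * (g * x)) y z * (ω x (x⁻¹ * (g * (x * y))) z * ω x (x⁻¹ * (g * x)) y)) *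
            ((ω (x * y) (y⁻¹ * (x⁻¹ * (g * (x * y)))) z * ω x y (y⁻¹ * (x⁻¹ * (g * (x * (y * z)))))) *
              (ω y z (z⁻¹ * (y⁻¹ * (x⁻¹ * (g * (x * (y * z)))))) *
                (ω x (y * z) (z⁻¹ * (y⁻¹ * (x⁻¹ * (g * (x * (y * z)))))) * ω x y z))))) =
      (ω (x⁻¹ * (g * x)) y z *
        (ω y z (z⁻¹ * (y⁻¹ * (x⁻¹ * (g * (x * (y * z)))))) *
          ((ω y (y⁻¹ * (x⁻¹ * (g * (x * y)))) z)⁻¹ *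
            (ω g x (y * z) *
              (ω x (y * z) (z⁻¹ * (y⁻¹ * (x⁻¹ * (g * (x * (y * z)))))) *
                (ω x (x⁻¹ * (g * x)) (y * z))⁻¹))))) *
        ((ω x y z * (ω g (x * y) z * ω g x y)) *
          ((ω (g * x) y z * ω x (x⁻¹ * (g * x)) (y * z)) *
            ((ω y (y⁻¹ * (x⁻¹ * (g * (x * y)))) z * (ω x (x⁻¹ * (g * (x * y))) z * ω x y (y⁻¹ * (x⁻¹ * (g * (x * y)))))) *
              (ω (x * y) z (z⁻¹ * (y⁻¹ * (x⁻¹ * (g * (x * (y * z)))))) * ω x y (y⁻¹ * (x⁻¹ * (g * (x * (y * z))))))))) := by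
    rw [Units.ext_iff]
    push_cast
    field_simp
  rw [hA, hC] at key
  rw [hB, hD] at key
  exact mul_right_cancel key
end

section
/- Let G be a finite group and ω a normalized 3-cocycle on G with values in ℂˣ. Then for all a, b, x, y ∈ G one has the mixed identity θ_{ab}(x,y)·γ_{xy}(a,b) = θ_a(x,y)·θ_b(x,y)·γ_x(a,b)·γ_y(a^x, b^x). (This identity is what makes the coproduct of the twisted quantum double D^ω(G) an algebra homomorphism.) -/
/-- The mixed identity making the coproduct of `D^ω(G)` an algebra homomorphism. -/
theorem theta_gamma_mixed_identity {G : Type*} [Group G] [Finite G]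
    (ω : G → G → G → ℂˣ) (hω : IsNormalized3Cocycle ω) :
    ∀ a b x y : G,
      thetaDPR ω (a * b) x y * gammaDPR ω (x * y) a b =
        thetaDPR ω a x y * thetaDPR ω b x y * gammaDPR ω x a b *
          gammaDPR ω y (groupConj a x) (groupConj b x) := by
  intro a b x y
  have h1 := hω.1 a b x y
  have h2 := hω.1 a x (x⁻¹*b*x) y
  have h3 := hω.1 a x y ((x*y)⁻¹*b*(x*y))
  have h4 := hω.1 x (x⁻¹*a*x) (x⁻¹*b*x) y
  have h5 := hω.1 x (x⁻¹*a*x) y ((x*y)⁻¹*b*(x*y))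
  have h6 := hω.1 x y ((x*y)⁻¹*a*(x*y)) ((x*y)⁻¹*b*(x*y))
  simp only [thetaDPR, gammaDPR, groupConj, mul_assoc, mul_inv_rev,
    inv_mul_cancel_left, mul_inv_cancel_left] at h1 h2 h3 h4 h5 h6 ⊢
  have cancel : ∀ u v : ℂˣ,
      u * ((ω b x y * (ω a (b * x) y * ω a b x)) *
        ((ω (a * x) (x⁻¹ * (b * x)) y * ω a x (x⁻¹ * (b * (x * y)))) *
        ((ω x y (y⁻¹ * (x⁻¹ * (b * (x * y)))) * (ω a (x * y) (y⁻¹ * (x⁻¹ * (b * (x * y)))) * ω a x y)) *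
        ((ω (x⁻¹ * (a * x)) (x⁻¹ * (b * x)) y * (ω x (x⁻¹ * (a * (b * x))) y * ω x (x⁻¹ * (a * x)) (x⁻¹ * (b * x)))) *
        ((ω (a * x) y (y⁻¹ * (x⁻¹ * (b * (x * y)))) * ω x (x⁻¹ * (a * x)) (x⁻¹ * (b * (x * y)))) *
        (ω y (y⁻¹ * (x⁻¹ * (a * (x * y)))) (y⁻¹ * (x⁻¹ * (b * (x * y)))) *
          (ω x (x⁻¹ * (a * (x * y))) (y⁻¹ * (x⁻¹ * (b * (x * y)))) * ω x y (y⁻¹ * (x⁻¹ * (a * (x * y))))))))))) =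
      v * ((ω (a * b) x y * ω a b (x * y)) *
        ((ω x (x⁻¹ * (b * x)) y * (ω a (b * x) y * ω a x (x⁻¹ * (b * x)))) *
        ((ω (a * x) y (y⁻¹ * (x⁻¹ * (b * (x * y)))) * ω a x (x⁻¹ * (b * (x * y)))) *
        ((ω (a * x) (x⁻¹ * (b * x)) y * ω x (x⁻¹ * (a * x)) (x⁻¹ * (b * (x * y)))) *
        ((ω (x⁻¹ * (a * x)) y (y⁻¹ * (x⁻¹ * (b * (x * y)))) *
            (ω x (x⁻¹ * (a * (x * y))) (y⁻¹ * (x⁻¹ * (b * (x * y)))) * ω x (x⁻¹ * (a * x)) y)) *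
        (ω (x * y) (y⁻¹ * (x⁻¹ * (a * (x * y)))) (y⁻¹ * (x⁻¹ * (b * (x * y)))) *
          ω x y (y⁻¹ * (x⁻¹ * (a * (b * (x * y)))))))))))
      → u = v := by
    simp only [h1, h2, h3, h4, h5, h6]
    exact fun u v h => mul_right_cancel h
  apply cancel
  rw [← Additive.ofMul.apply_eq_iff_eq]
  simp only [ofMul_mul, ofMul_inv]
  abel
end

section
/- Let G be a finite group and ω a normalized 3-cocycle on G with values in ℂˣ. Then for all x, a, b, c ∈ G one has γ_x(a,b)·γ_x(ab,c)·ω(a^x, b^x, c^x) = ω(a,b,c)·γ_x(a,bc)·γ_x(b,c). (This identity is what makes the coproduct of the twisted quantum double D^ω(G) quasi-coassociative with respect to the Drinfeld associator determined by ω.) -/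
/-- The identity giving quasi-coassociativity of the coproduct of `D^ω(G)`. -/
theorem gamma_quasi_coassociativity {G : Type*} [Group G] [Finite G]
    (ω : G → G → G → ℂˣ) (hω : IsNormalized3Cocycle ω) :
    ∀ x a b c : G,
      gammaDPR ω x a b * gammaDPR ω x (a * b) c *
          ω (groupConj a x) (groupConj b x) (groupConj c x) =
        ω a b c * gammaDPR ω x a (b * c) * gammaDPR ω x b c := by
  obtain ⟨hc, -⟩ := hω
  intro x a b c
  have h1 := hc a b c x
  have h2 := hc a b x (groupConj c x)
  have h3 := hc a x (groupConj b x) (groupConj c x)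
  have h4 := hc x (groupConj a x) (groupConj b x) (groupConj c x)
  have key : gammaDPR ω x a b * gammaDPR ω x (a * b) c *
          ω (groupConj a x) (groupConj b x) (groupConj c x) *
        ((ω b c x * ω a (b * c) x * ω a b c) *
         ((ω (a * b) x (groupConj c x) * ω a b (x * groupConj c x)) *
          ((ω x (groupConj b x) (groupConj c x) * ω a (x * groupConj b x) (groupConj c x) *
              ω a x (groupConj b x)) *
           (ω (x * groupConj a x) (groupConj b x) (groupConj c x) *
              ω x (groupConj a x) (groupConj b x * groupConj c x))))) =
      ω a b c * gammaDPR ω x a (b * c) * gammaDPR ω x b c *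
        ((ω (a * b) c x * ω a b (c * x)) *
         ((ω b x (groupConj c x) * ω a (b * x) (groupConj c x) * ω a b x) *
          ((ω (a * x) (groupConj b x) (groupConj c x) *
              ω a x (groupConj b x * groupConj c x)) *
           (ω (groupConj a x) (groupConj b x) (groupConj c x) *
              ω x (groupConj a x * groupConj b x) (groupConj c x) *
              ω x (groupConj a x) (groupConj b x))))) := by
    simp only [gammaDPR, groupConj, mul_assoc, mul_inv_cancel_left, inv_mul_cancel_left]
    rw [Units.ext_iff]
    simp only [Units.val_mul, Units.val_inv_eq_inv_val]
    field_simp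
  rw [h1, h2, h3, h4] at key
  exact mul_right_cancel key
end

section
/- Let G be a finite group and ω a normalized 3-cocycle on G with values in ℂˣ. Then the set B^ω(G) := {g ∈ G : γ_g is a 2-coboundary on G} is a subgroup of G. -/
lemma groupConj_mul {G : Type*} [Group G] (a b x : G) :
    groupConj (a * b) x = groupConj a x * groupConj b x := by
  simp [groupConj, mul_assoc]

lemma groupConj_conj {G : Type*} [Group G] (a x : G) :
    groupConj (groupConj a x⁻¹) x = a := by
  simp [groupConj, mul_assoc]

lemma gamma_one {G : Type*} [Group G] (ω : G → G → G → ℂˣ)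
    (hω : IsNormalized3Cocycle ω) (a b : G) : gammaDPR ω 1 a b = 1 := by
  have h1 := hω.2 a b 1 (by simp)
  have h2 := hω.2 1 (groupConj a 1) (groupConj b 1) (by simp)
  have h3 := hω.2 a 1 (groupConj b 1) (by simp)
  simp [gammaDPR, h1, h2, h3]

/-- Key DPR identity: `γ_{xy}(a,b)·θ_{ab}(x,y) = γ_x(a,b)·γ_y(a^x,b^x)·θ_a(x,y)·θ_b(x,y)`. -/
lemma key_identity {G : Type*} [Group G] (ω : G → G → G → ℂˣ)
    (hω : IsNormalized3Cocycle ω) (x y a b : G) :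
    gammaDPR ω (x * y) a b * thetaDPR ω (a * b) x y =
      gammaDPR ω x a b * gammaDPR ω y (groupConj a x) (groupConj b x) *
        thetaDPR ω a x y * thetaDPR ω b x y := by
  obtain ⟨hc, -⟩ := hω
  have h1 := hc x y (groupConj a (x * y)) (groupConj b (x * y))
  have h2 := hc a b x y
  have h3 := hc a x y (groupConj b (x * y))
  have h4 := hc a x (groupConj b x) y
  have h5 := hc x (groupConj a x) (groupConj b x) y
  have h6 := hc x (groupConj a x) y (groupConj b (x * y))
  have E : (gammaDPR ω (x * y) a b * thetaDPR ω (a * b) x y) *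
      ((ω y (groupConj a (x * y)) (groupConj b (x * y)) * ω x (y * (groupConj a (x * y))) (groupConj b (x * y)) * ω x y (groupConj a (x * y))) * (ω b x y * ω a (b * x) y * ω a b x) * (ω x y (groupConj b (x * y)) * ω a (x * y) (groupConj b (x * y)) * ω a x y) * (ω (groupConj a x) (groupConj b x) y * ω x ((groupConj a x) * (groupConj b x)) y * ω x (groupConj a x) (groupConj b x)) * (ω (a * x) (groupConj b x) y * ω a x ((groupConj b x) * y)) * (ω (x * (groupConj a x)) y (groupConj b (x * y)) * ω x (groupConj a x) (y * (groupConj b (x * y))))) =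
      (gammaDPR ω x a b * gammaDPR ω y (groupConj a x) (groupConj b x) *
        thetaDPR ω a x y * thetaDPR ω b x y) *
      ((ω (x * y) (groupConj a (x * y)) (groupConj b (x * y)) * ω x y ((groupConj a (x * y)) * (groupConj b (x * y)))) * (ω (a * b) x y * ω a b (x * y)) * (ω (a * x) y (groupConj b (x * y)) * ω a x (y * (groupConj b (x * y)))) * (ω (x * (groupConj a x)) (groupConj b x) y * ω x (groupConj a x) ((groupConj b x) * y)) * (ω x (groupConj b x) y * ω a (x * (groupConj b x)) y * ω a x (groupConj b x)) * (ω (groupConj a x) y (groupConj b (x * y)) * ω x ((groupConj a x) * y) (groupConj b (x * y)) * ω x (groupConj a x) y)) := by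
    simp only [gammaDPR, thetaDPR, groupConj, mul_inv_rev, mul_assoc,
      inv_mul_cancel_left, mul_inv_cancel_left, inv_inv]
    rw [Units.ext_iff]
    push_cast
    field_simp
  rw [h1, h2, h3, h5, h4, h6] at E
  exact mul_right_cancel E

/-- `B^ω(G) = {g ∈ G : γ_g is a 2-coboundary on G}` is a subgroup of `G`. -/
theorem Bomega_is_subgroup {G : Type*} [Group G] [Finite G]
    (ω : G → G → G → ℂˣ) (hω : IsNormalized3Cocycle ω) :
    ∃ H : Subgroup G, ∀ g : G,
      g ∈ H ↔ ∃ τ : G → ℂˣ, ∀ x y : G,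
        gammaDPR ω g x y = τ x * τ y * (τ (x * y))⁻¹ := by
  refine ⟨{ carrier := {g | ∃ τ : G → ℂˣ, ∀ x y : G,
              gammaDPR ω g x y = τ x * τ y * (τ (x * y))⁻¹}
            one_mem' := ⟨fun _ => 1, fun x y => by simp [gamma_one ω hω]⟩
            mul_mem' := ?_
            inv_mem' := ?_ }, fun g => Iff.rfl⟩
  · rintro g h ⟨τ, hτ⟩ ⟨σ, hσ⟩
    refine ⟨fun k => τ k * σ (groupConj k g) * thetaDPR ω k g h, fun x y => ?_⟩
    have K := key_identity ω hω g h x y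
    have h1 := hτ x y
    have h2 := hσ (groupConj x g) (groupConj y g)
    have hcm : groupConj x g * groupConj y g = groupConj (x * y) g :=
      (groupConj_mul x y g).symm
    refine mul_right_cancel (b := thetaDPR ω (x * y) g h) ?_
    rw [K, h1, h2, hcm]
    rw [Units.ext_iff]
    push_cast
    field_simp
  · rintro g ⟨τ, hτ⟩
    refine ⟨fun k => (τ (groupConj k g⁻¹) * thetaDPR ω (groupConj k g⁻¹) g g⁻¹)⁻¹,
      fun x y => ?_⟩
    have K := key_identity ω hω g g⁻¹ (groupConj x g⁻¹) (groupConj y g⁻¹)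
    rw [mul_inv_cancel, gamma_one ω hω, one_mul, groupConj_conj, groupConj_conj,
      ← groupConj_mul] at K
    have h1 := hτ (groupConj x g⁻¹) (groupConj y g⁻¹)
    rw [← groupConj_mul] at h1
    have K2 : gammaDPR ω g⁻¹ x y =
        thetaDPR ω (groupConj (x * y) g⁻¹) g g⁻¹ *
          (gammaDPR ω g (groupConj x g⁻¹) (groupConj y g⁻¹))⁻¹ *
          (thetaDPR ω (groupConj x g⁻¹) g g⁻¹)⁻¹ *
          (thetaDPR ω (groupConj y g⁻¹) g g⁻¹)⁻¹ := by
      rw [K]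
      rw [Units.ext_iff]
      push_cast
      field_simp
    rw [K2, h1]
    rw [Units.ext_iff]
    push_cast
    field_simp
end

section
/- Let G be a finite group and ω a normalized 3-cocycle on G with values in ℂˣ. Let g, h ∈ Z(G) be central elements such that θ_g, θ_h and θ_{gh} are 2-coboundaries on G, with trivializations τ_g, τ_h, τ_{gh} respectively. Then the function β(g,h) : G → ℂˣ defined by β(g,h)(k) := τ_g(k)·τ_h(k)·τ_{gh}(k)⁻¹·θ_k(g,h) is a group homomorphism from G to ℂˣ, i.e. a character of G. -/
lemma conj_of_central {G : Type*} [Group G] {g : G} (hg : g ∈ Subgroup.center G) (x : G) :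
    groupConj g x = g := by
  unfold groupConj
  rw [mul_assoc, ← Subgroup.mem_center_iff.mp hg x, ← mul_assoc, inv_mul_cancel, one_mul]

lemma conj_by_central {G : Type*} [Group G] {g : G} (hg : g ∈ Subgroup.center G) (x : G) :
    groupConj x g = x := by
  unfold groupConj
  rw [mul_assoc, Subgroup.mem_center_iff.mp hg x, ← mul_assoc, inv_mul_cancel, one_mul]

/-- For central `g, h` with `θ_g, θ_h, θ_{gh}` coboundaries,
`β(g,h)(k) = τ_g(k)τ_h(k)τ_{gh}(k)⁻¹θ_k(g,h)` is a character of `G`. -/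
theorem beta_is_character {G : Type*} [Group G] [Finite G]
    (ω : G → G → G → ℂˣ) (hω : IsNormalized3Cocycle ω)
    (g h : G) (hg : g ∈ Subgroup.center G) (hh : h ∈ Subgroup.center G)
    (τg τh τgh : G → ℂˣ)
    (hτg : ∀ x y : G, thetaDPR ω g x y = τg x * τg y * (τg (x * y))⁻¹)
    (hτh : ∀ x y : G, thetaDPR ω h x y = τh x * τh y * (τh (x * y))⁻¹)
    (hτgh : ∀ x y : G, thetaDPR ω (g * h) x y = τgh x * τgh y * (τgh (x * y))⁻¹) :
    ∀ k m : G,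
      τg (k * m) * τh (k * m) * (τgh (k * m))⁻¹ * thetaDPR ω (k * m) g h =
        (τg k * τh k * (τgh k)⁻¹ * thetaDPR ω k g h) *
          (τg m * τh m * (τgh m)⁻¹ * thetaDPR ω m g h) := by
  intro k m
  have hgh : g * h ∈ Subgroup.center G := Subgroup.mul_mem _ hg hh
  have cgk : g * k = k * g := (Subgroup.mem_center_iff.mp hg k).symm
  have cgm : g * m = m * g := (Subgroup.mem_center_iff.mp hg m).symm
  have chk : h * k = k * h := (Subgroup.mem_center_iff.mp hh k).symm
  have chm : h * m = m * h := (Subgroup.mem_center_iff.mp hh m).symm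
  have cg : ∀ x : G, groupConj g x = g := fun x => conj_of_central hg x
  have ch : ∀ x : G, groupConj h x = h := fun x => conj_of_central hh x
  have cgh2 : ∀ x : G, groupConj (g * h) x = g * h := fun x => conj_of_central hgh x
  have dg : ∀ x : G, groupConj x g = x := fun x => conj_by_central hg x
  have dgh : ∀ x : G, groupConj x (g * h) = x := fun x => conj_by_central hgh x
  have e1 : ω h k m * ω g (k * h) m * ω g h k = ω (g * h) k m * ω g h (k * m) := by
    simpa only [cgk, cgm, chk, chm] using hω.1 g h k m
  have e2 : ω k h m * ω g (k * h) m * ω g k h = ω (k * g) h m * ω g k (m * h) := by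
    simpa only [cgk, cgm, chk, chm] using hω.1 g k h m
  have e3 : ω k m h * ω g (k * m) h * ω g k m = ω (k * g) m h * ω g k (m * h) := by
    simpa only [cgk, cgm, chk, chm] using hω.1 g k m h
  have e4 : ω g h m * ω k (g * h) m * ω k g h = ω (k * g) h m * ω k g (m * h) := by
    simpa only [cgk, cgm, chk, chm] using hω.1 k g h m
  have e5 : ω g m h * ω k (m * g) h * ω k g m = ω (k * g) m h * ω k g (m * h) := by
    simpa only [cgk, cgm, chk, chm] using hω.1 k g m h
  have e6 : ω m g h * ω k (m * g) h * ω k m g = ω (k * m) g h * ω k m (g * h) := by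
    simpa only [cgk, cgm, chk, chm] using hω.1 k m g h
  have f1 : ω g k m * ω k m g * (ω k g m)⁻¹ = τg k * τg m * (τg (k * m))⁻¹ := by
    simpa only [thetaDPR, cg] using hτg k m
  have f2 : ω h k m * ω k m h * (ω k h m)⁻¹ = τh k * τh m * (τh (k * m))⁻¹ := by
    simpa only [thetaDPR, ch] using hτh k m
  have f3 : ω (g * h) k m * ω k m (g * h) * (ω k (g * h) m)⁻¹ = τgh k * τgh m * (τgh (k * m))⁻¹ := by
    simpa only [thetaDPR, cgh2] using hτgh k m
  have key : (τg (k * m) * τh (k * m) * (τgh (k * m))⁻¹ * (ω (k * m) g h * ω g h (k * m) * (ω g (k * m) h)⁻¹)) * ((ω (k * g) h m * ω g k (m * h)) * (ω (k * g) m h * ω k g (m * h)) * (τg k * τg m * (τg (k * m))⁻¹) * (τh k * τh m * (τh (k * m))⁻¹)) * ((ω h k m * ω g (k * h) m * ω g h k) * (ω k m h * ω g (k * m) h * ω g k m) * (ω g h m * ω k (g * h) m * ω k g h) * (ω m g h * ω k (m * g) h * ω k m g) * (ω (g * h) k m * ω k m (g * h) * (ω k (g * h) m)⁻¹)) = (τg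 k * τh k * (τgh k)⁻¹ * (ω k g h * ω g h k * (ω g k h)⁻¹) * (τg m * τh m * (τgh m)⁻¹ * (ω m g h * ω g h m * (ω g m h)⁻¹))) * ((ω k h m * ω g (k * h) m * ω g k h) * (ω g m h * ω k (m * g) h * ω k g m) * (ω g k m * ω k m g * (ω k g m)⁻¹) * (ω h k m * ω k m h * (ω k h m)⁻¹)) * ((ω (g * h) k m * ω g h (k * m)) * (ω (k * g) m h * ω g k (m * h)) * (ω (k * g) h m * ω k g (m * h)) * (ω (k * m) g h * ω k m (g * h)) * (τgh k * τgh m * (τgh (k * m))⁻¹)) := by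
    rw [Units.ext_iff]
    simp only [Units.val_mul, Units.val_inv_eq_inv_val]
    field_simp
  have hpos : (ω k h m * ω g (k * h) m * ω g k h) * (ω g m h * ω k (m * g) h * ω k g m) * (ω g k m * ω k m g * (ω k g m)⁻¹) * (ω h k m * ω k m h * (ω k h m)⁻¹) = (ω (k * g) h m * ω g k (m * h)) * (ω (k * g) m h * ω k g (m * h)) * (τg k * τg m * (τg (k * m))⁻¹) * (τh k * τh m * (τh (k * m))⁻¹) := by rw [e2, e5, f1, f2]
  have hneg : (ω (g * h) k m * ω g h (k * m)) * (ω (k * g) m h * ω g k (m * h)) * (ω (k * g) h m * ω k g (m * h)) * (ω (k * m) g h * ω k m (g * h)) * (τgh k * τgh m * (τgh (k * m))⁻¹) = (ω h k m * ω g (k * h) m * ω g h k) * (ω k m h * ω g (k * m) h * ω g k m) * (ω g h m * ω k (g * h) m * ω k g h) * (ω m g h * ω k (m * g) h * ω k m g) * (ω (g * h) k m * ω k m (g * h) * (ω k (g * h) m)⁻¹) := by rw [e1, e3, e4, e6, f3]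
  rw [hpos, hneg] at key
  simp only [thetaDPR, dg, dgh]
  exact mul_right_cancel (mul_right_cancel key)
end

section
/- Let G be a finite group and ω a normalized 3-cocycle on G with values in ℂˣ. Let g, h, k ∈ Z(G) be central elements such that θ_u is a 2-coboundary on G for each u ∈ {g, h, k, gh, hk, ghk}, with a chosen trivialization τ_u for each such u. Define β(u,v)(m) := τ_u(m)·τ_v(m)·τ_{uv}(m)⁻¹·θ_m(u,v). Then β satisfies the 2-cocycle identity: for all m ∈ G, β(g,h)(m)·β(gh,k)(m) = β(h,k)(m)·β(g,hk)(m). -/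
/-- The 2-cocycle identity for `β` on central elements. -/
theorem beta_two_cocycle {G : Type*} [Group G] [Finite G]
    (ω : G → G → G → ℂˣ) (hω : IsNormalized3Cocycle ω)
    (g h k : G) (hg : g ∈ Subgroup.center G) (hh : h ∈ Subgroup.center G)
    (hk : k ∈ Subgroup.center G)
    (τg τh τk τgh τhk τghk : G → ℂˣ)
    (hτg : ∀ x y : G, thetaDPR ω g x y = τg x * τg y * (τg (x * y))⁻¹)
    (hτh : ∀ x y : G, thetaDPR ω h x y = τh x * τh y * (τh (x * y))⁻¹)
    (hτk : ∀ x y : G, thetaDPR ω k x y = τk x * τk y * (τk (x * y))⁻¹)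
    (hτgh : ∀ x y : G, thetaDPR ω (g * h) x y = τgh x * τgh y * (τgh (x * y))⁻¹)
    (hτhk : ∀ x y : G, thetaDPR ω (h * k) x y = τhk x * τhk y * (τhk (x * y))⁻¹)
    (hτghk : ∀ x y : G,
      thetaDPR ω (g * h * k) x y = τghk x * τghk y * (τghk (x * y))⁻¹) :
    ∀ m : G,
      (τg m * τh m * (τgh m)⁻¹ * thetaDPR ω m g h) *
          (τgh m * τk m * (τghk m)⁻¹ * thetaDPR ω m (g * h) k) =
        (τh m * τk m * (τhk m)⁻¹ * thetaDPR ω m h k) *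
          (τg m * τhk m * (τghk m)⁻¹ * thetaDPR ω m g (h * k)) := by
  intro m
  have hconj : ∀ z : G, z ∈ Subgroup.center G → ∀ x : G, groupConj x z = x := by
    intro z hz x
    simp [groupConj, mul_assoc, Subgroup.mem_center_iff.mp hz x]
  have hgh : g * h ∈ Subgroup.center G := mul_mem hg hh
  have hhk : h * k ∈ Subgroup.center G := mul_mem hh hk
  have hghk : g * h * k ∈ Subgroup.center G := mul_mem hgh hk
  have hg_hk : g * (h * k) ∈ Subgroup.center G := mul_mem hg hhk
  simp only [thetaDPR, hconj g hg m, hconj h hh m, hconj k hk m, hconj _ hgh m,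
    hconj _ hhk m, hconj _ hghk m, hconj _ hg_hk m]
  have c1 := hω.1 m g h k
  have c2 := hω.1 g m h k
  have c3 := hω.1 g h m k
  have c4 := hω.1 g h k m
  rw [Subgroup.mem_center_iff.mp hg m] at c1
  rw [Subgroup.mem_center_iff.mp hh m] at c2
  rw [Subgroup.mem_center_iff.mp hk m] at c3
  rw [← Units.val_inj] at c1 c2 c3 c4 ⊢
  push_cast at c1 c2 c3 c4 ⊢
  field_simp
  refine mul_right_cancel₀ (Units.ne_zero
    ((ω g h k * ω m (g * h) k * ω m g h) *
     (ω h m k * ω g (h * m) k * ω g h m) *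
     (ω (g * m) h k * ω g m (h * k)) *
     (ω (g * h) k m * ω g h (k * m)))) ?_
  push_cast
  linear_combination
    ((ω m g h : ℂ) * (ω g h m : ℂ) * (ω m (g * h) k : ℂ) * (ω (g * h) k m : ℂ) *
      (ω h m k : ℂ) * (ω g m (h * k) : ℂ)) *
    ( ((ω h m k : ℂ) * (ω g (h * m) k : ℂ) * (ω g h m : ℂ)) *
      ((ω (g * m) h k : ℂ) * (ω g m (h * k) : ℂ)) *
      ((ω (g * h) k m : ℂ) * (ω g h (k * m) : ℂ)) * c1
    - ((ω (g * m) h k : ℂ) * (ω m g (h * k) : ℂ)) *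
      ((ω (g * h) m k : ℂ) * (ω g h (k * m) : ℂ)) *
      ((ω (g * h) k m : ℂ) * (ω g h (k * m) : ℂ)) * c2
    + ((ω (g * m) h k : ℂ) * (ω m g (h * k) : ℂ)) *
      ((ω (g * m) h k : ℂ) * (ω g m (h * k) : ℂ)) *
      ((ω (g * h) k m : ℂ) * (ω g h (k * m) : ℂ)) * c3
    - ((ω (g * m) h k : ℂ) * (ω m g (h * k) : ℂ)) *
      ((ω (g * h) m k : ℂ) * (ω g h (k * m) : ℂ)) *
      ((ω m h k : ℂ) * (ω g (h * m) k : ℂ) * (ω g m h : ℂ)) * c4 )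
end

section
/- Let G be a finite group, ω a normalized 3-cocycle on G with values in ℂˣ, and A a subgroup of the center Z(G) such that for every a ∈ A the 2-cocycle θ_a is a 2-coboundary on G, with a chosen trivialization τ_a for each a ∈ A. Define β(a,b)(k) := τ_a(k)·τ_b(k)·τ_{ab}(k)⁻¹·θ_k(a,b). Suppose ν assigns to each a ∈ A a group homomorphism ν(a) : G → ℂˣ such that β(a,b)(k) = ν(a)(k)·ν(b)(k)·ν(ab)(k)⁻¹ for all a, b ∈ A and k ∈ G. Then the function (a∣b)_ν := τ_a(b)·τ_b(a)·(ν(a)(b)·ν(b)(a))⁻¹ is a symmetric bicharacter on A: for all a, b, c ∈ A one has (a∣b)_ν = (b∣a)_ν and (ab∣c)_ν = (a∣c)_ν·(b∣c)_ν. -/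
/-- The pairing `(a∣b)_ν = τ_a(b)τ_b(a)(ν(a)(b)ν(b)(a))⁻¹` is a symmetric
bicharacter on the central subgroup `A`. -/
theorem pairing_is_symmetric_bicharacter {G : Type*} [Group G] [Finite G]
    (ω : G → G → G → ℂˣ) (hω : IsNormalized3Cocycle ω)
    (A : Subgroup G) (hA : A ≤ Subgroup.center G)
    (τ : G → G → ℂˣ)
    (hτ : ∀ a ∈ A, ∀ x y : G, thetaDPR ω a x y = τ a x * τ a y * (τ a (x * y))⁻¹)
    (ν : G → G →* ℂˣ)
    (hν : ∀ a ∈ A, ∀ b ∈ A, ∀ m : G,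
      τ a m * τ b m * (τ (a * b) m)⁻¹ * thetaDPR ω m a b =
        ν a m * ν b m * (ν (a * b) m)⁻¹) :
    (∀ a ∈ A, ∀ b ∈ A,
      τ a b * τ b a * (ν a b * ν b a)⁻¹ = τ b a * τ a b * (ν b a * ν a b)⁻¹) ∧
    (∀ a ∈ A, ∀ b ∈ A, ∀ c ∈ A,
      τ (a * b) c * τ c (a * b) * (ν (a * b) c * ν c (a * b))⁻¹ =
        (τ a c * τ c a * (ν a c * ν c a)⁻¹) *
          (τ b c * τ c b * (ν b c * ν c b)⁻¹)) := by
  constructor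
  · intro a _ b _
    rw [mul_comm (τ a b) (τ b a), mul_comm (ν a b) (ν b a)]
  · intro a ha b hb c hc
    have h1 : τ c (a * b) = τ c a * τ c b * (thetaDPR ω c a b)⁻¹ := by
      have h := hτ c hc a b
      rw [eq_mul_inv_iff_mul_eq, mul_comm, ← eq_mul_inv_iff_mul_eq, ← h]
    have h2 : ν (a * b) c =
        ν a c * ν b c * (τ a c * τ b c * (τ (a * b) c)⁻¹ * thetaDPR ω c a b)⁻¹ := by
      have h := hν a ha b hb c
      rw [eq_mul_inv_iff_mul_eq, mul_comm, ← eq_mul_inv_iff_mul_eq, ← h]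
    have h3 : ν c (a * b) = ν c a * ν c b := map_mul (ν c) a b
    rw [h1, h2, h3]
    rw [Units.ext_iff]
    simp only [Units.val_mul, Units.val_inv_eq_inv_val]
    field_simp
end

section
/- With the lattice data (M, L, B, c₀, s) as in the context, the function ω on A := M/L defined by ω(a,b,c) := (−1)^{B(s(c), d(a,b))}·c₀(s(c), d(a,b)), where d(a,b) := s(a) + s(b) − s(a+b) ∈ L, is a normalized 3-cocycle on the abelian group A: ω(b,c,e)·ω(a,b+c,e)·ω(a,b,c) = ω(a+b,c,e)·ω(a,b,c+e) for all a,b,c,e ∈ A, and ω(a,b,c) = 1 whenever any of a, b, c equals 0. -/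
/-- For an even lattice `L` inside `M` (playing the role of the dual lattice `L*`),
with alternating bicharacter `c₀` restricting to `(-1)^{B(·,·)}` on `L` and a
normalized section `s` of `M → M/L`, the function
`ω(a,b,c) = (-1)^{B(s(c), d(a,b))}·c₀(s(c), d(a,b))` with `d(a,b) = s(a)+s(b)-s(a+b)`
is a normalized 3-cocycle on `A = M/L`. -/
theorem lattice_omega_is_normalized_three_cocycle
    {M : Type*} [AddCommGroup M] (L : AddSubgroup M)
    (B : M → M → ℚ)
    (hBsymm : ∀ x y : M, B x y = B y x)
    (hBadd₁ : ∀ x y z : M, B (x + y) z = B x z + B y z)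
    (hBadd₂ : ∀ x y z : M, B x (y + z) = B x y + B x z)
    (hBint : ∀ x : M, ∀ α ∈ L, ∃ n : ℤ, B x α = (n : ℚ))
    (hBeven : ∀ α ∈ L, ∃ n : ℤ, B α α = 2 * (n : ℚ))
    (c₀ : M → M → ℂˣ)
    (hc₀add₁ : ∀ x y z : M, c₀ (x + y) z = c₀ x z * c₀ y z)
    (hc₀add₂ : ∀ x y z : M, c₀ x (y + z) = c₀ x y * c₀ x z)
    (hc₀alt : ∀ x : M, c₀ x x = 1)
    (hc₀L : ∀ α ∈ L, ∀ β ∈ L, ∀ n : ℤ, (n : ℚ) = B α β → c₀ α β = (-1 : ℂˣ) ^ n)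
    (s : M ⧸ L → M)
    (hs : ∀ a : M ⧸ L, ((s a : M) : M ⧸ L) = a)
    (hs0 : s 0 = 0)
    (ω : (M ⧸ L) → (M ⧸ L) → (M ⧸ L) → ℂˣ)
    (hω : ∀ a b c : M ⧸ L, ∀ n : ℤ,
      (n : ℚ) = B (s c) (s a + s b - s (a + b)) →
      ω a b c = (-1 : ℂˣ) ^ n * c₀ (s c) (s a + s b - s (a + b))) :
    (∀ a b c e : M ⧸ L,
      ω b c e * ω a (b + c) e * ω a b c = ω (a + b) c e * ω a b (c + e)) ∧
    (∀ a b c : M ⧸ L, a = 0 ∨ b = 0 ∨ c = 0 → ω a b c = 1) := by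
  classical
  choose! n hn using hBint
  set d : (M ⧸ L) → (M ⧸ L) → M := fun a b => s a + s b - s (a + b) with hd_def
  have hdL : ∀ a b : M ⧸ L, d a b ∈ L := by
    intro a b
    rw [← QuotientAddGroup.eq_zero_iff]
    simp [d, hs]
  set f : M → M → ℂˣ := fun x α => (-1 : ℂˣ) ^ (n x α) * c₀ x α with hf_def
  have hωf : ∀ a b c : M ⧸ L, ω a b c = f (s c) (d a b) :=
    fun a b c => hω a b c (n (s c) (d a b)) (hn _ _ (hdL a b)).symm
  have hnadd₁ : ∀ x y α : M, α ∈ L → n (x + y) α = n x α + n y α := by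
    intro x y α hα
    have : ((n (x + y) α : ℤ) : ℚ) = ((n x α + n y α : ℤ) : ℚ) := by
      push_cast
      rw [← hn _ _ hα, ← hn _ _ hα, ← hn _ _ hα, hBadd₁]
    exact_mod_cast this
  have hnadd₂ : ∀ x α β : M, α ∈ L → β ∈ L → n x (α + β) = n x α + n x β := by
    intro x α β hα hβ
    have : ((n x (α + β) : ℤ) : ℚ) = ((n x α + n x β : ℤ) : ℚ) := by
      push_cast
      rw [← hn _ _ hα, ← hn _ _ hβ, ← hn _ _ (add_mem hα hβ), hBadd₂]
    exact_mod_cast this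
  have hfadd₁ : ∀ x y α : M, α ∈ L → f (x + y) α = f x α * f y α := by
    intro x y α hα
    simp only [f, hnadd₁ x y α hα, hc₀add₁, zpow_add]
    exact mul_mul_mul_comm _ _ _ _
  have hfadd₂ : ∀ x α β : M, α ∈ L → β ∈ L → f x (α + β) = f x α * f x β := by
    intro x α β hα hβ
    simp only [f, hnadd₂ x α β hα hβ, hc₀add₂, zpow_add]
    exact mul_mul_mul_comm _ _ _ _
  have hfL : ∀ α ∈ L, ∀ β ∈ L, f α β = 1 := by
    intro α hα β hβ
    have hc := hc₀L α hα β hβ (n α β) (hn _ _ hβ).symm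
    simp only [f, hc, ← zpow_add]
    exact Even.neg_one_zpow ⟨n α β, rfl⟩
  have hB0 : ∀ α : M, B 0 α = 0 := by
    intro α
    have h := hBadd₁ 0 0 α
    rw [add_zero] at h
    linarith
  have hB0' : ∀ x : M, B x 0 = 0 := by
    intro x
    have h := hBadd₂ x 0 0
    rw [add_zero] at h
    linarith
  have hn0 : ∀ α ∈ L, n 0 α = 0 := by
    intro α hα
    have : ((n 0 α : ℤ) : ℚ) = ((0 : ℤ) : ℚ) := by
      rw [← hn _ _ hα, hB0]; norm_num
    exact_mod_cast this
  have hn0' : ∀ x : M, n x 0 = 0 := by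
    intro x
    have : ((n x 0 : ℤ) : ℚ) = ((0 : ℤ) : ℚ) := by
      rw [← hn _ _ (zero_mem L), hB0']; norm_num
    exact_mod_cast this
  have hc₀0 : ∀ α : M, c₀ 0 α = 1 := by
    intro α
    have h := hc₀add₁ 0 0 α
    rw [add_zero] at h
    exact mul_eq_right.mp h.symm
  have hc₀0' : ∀ x : M, c₀ x 0 = 1 := by
    intro x
    have h := hc₀add₂ x 0 0
    rw [add_zero] at h
    exact mul_eq_right.mp h.symm
  have hf0₁ : ∀ α ∈ L, f 0 α = 1 := by
    intro α hα
    simp [f, hn0 α hα, hc₀0]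
  have hf0₂ : ∀ x : M, f x 0 = 1 := by
    intro x
    simp [f, hn0', hc₀0']
  constructor
  · intro a b c e
    rw [hωf, hωf, hωf, hωf, hωf]
    have key : d b c + d a (b + c) = d (a + b) c + d a b := by
      simp only [d]
      rw [← add_assoc a b c]
      abel
    have h1 : f (s e) (d b c) * f (s e) (d a (b + c))
        = f (s e) (d (a + b) c) * f (s e) (d a b) := by
      rw [← hfadd₂ _ _ _ (hdL b c) (hdL a (b + c)), key,
        hfadd₂ _ _ _ (hdL (a + b) c) (hdL a b)]
    have hsplit : s c + s e = s (c + e) + d c e := by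
      simp only [d]; abel
    have h2 : f (s (c + e)) (d a b) = f (s c) (d a b) * f (s e) (d a b) := by
      have := hfadd₁ (s c) (s e) (d a b) (hdL a b)
      rw [hsplit, hfadd₁ _ _ _ (hdL a b), hfL _ (hdL c e) _ (hdL a b), mul_one] at this
      exact this
    rw [h2, mul_assoc, mul_comm (f (s e) (d a (b + c))) (f (s c) (d a b)),
      ← mul_assoc, mul_comm (f (s e) (d b c)) (f (s c) (d a b)),
      mul_assoc, h1, mul_comm (f (s c) (d a b)) _, mul_assoc,
      mul_comm (f (s e) (d a b)) _]
  · intro a b c h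
    rcases h with rfl | rfl | rfl
    · have hd0 : d 0 b = 0 := by simp [d, hs0]
      rw [hωf, hd0, hf0₂]
    · have hd0 : d a 0 = 0 := by simp [d, hs0]
      rw [hωf, hd0, hf0₂]
    · rw [hωf, hs0, hf0₁ _ (hdL a b)]
end

section
/- Let G be a finite subgroup of SU(2, ℂ) of even order. Then G contains the matrix −I (the negative of the identity matrix), −I is the unique element of order 2 in G, and hence {I, −I} is the unique subgroup of G of order 2. -/
/-- The group structure on `Matrix.specialUnitaryGroup (Fin 2) ℂ`
(inverse given by star-transpose). -/
noncomputable instance : Group (Matrix.specialUnitaryGroup (Fin 2) ℂ) :=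
  { (inferInstance : Monoid (Matrix.specialUnitaryGroup (Fin 2) ℂ)) with
    inv := fun A => ⟨star A.1, by
      have hA := A.2
      rw [Matrix.mem_specialUnitaryGroup_iff] at hA ⊢
      refine ⟨Unitary.star_mem hA.1, ?_⟩
      have hdet : (A.1).det = 1 := hA.2
      simp [MonoidHom.mem_mker, Matrix.star_eq_conjTranspose,
        Matrix.det_conjTranspose, hdet]⟩
    inv_mul_cancel := fun A => Subtype.ext (Submonoid.mem_inf.mp A.2).1.1 }

lemma cayley2 (A : Matrix (Fin 2) (Fin 2) ℂ) :
    A * A = A.trace • A - A.det • (1 : Matrix (Fin 2) (Fin 2) ℂ) := by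
  ext i j
  fin_cases i <;> fin_cases j <;>
    simp [Matrix.mul_apply, Fin.sum_univ_two, Matrix.trace_fin_two,
      Matrix.det_fin_two, Matrix.one_apply] <;> ring

lemma key (A : Matrix (Fin 2) (Fin 2) ℂ) (hdet : A.det = 1) (hsq : A * A = 1) :
    A = 1 ∨ A = -1 := by
  have h := cayley2 A
  rw [hsq, hdet, one_smul] at h
  have h2 : A.trace • A = 1 + 1 := by
    rw [eq_sub_iff_add_eq] at h; rw [← h]
  have h00 := congrFun (congrFun h2 0) 0
  have h01 := congrFun (congrFun h2 0) 1
  have h10 := congrFun (congrFun h2 1) 0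
  have h11 := congrFun (congrFun h2 1) 1
  simp [Matrix.smul_apply, Matrix.add_apply, Matrix.one_apply] at h00 h01 h10 h11
  have ht : A.trace ≠ 0 := by intro h0; rw [h0, zero_mul] at h00; norm_num at h00
  have e01 : A 0 1 = 0 := h01.resolve_left ht
  have e10 : A 1 0 = 0 := h10.resolve_left ht
  have e : A 0 0 = A 1 1 := by
    exact mul_left_cancel₀ ht (h00.trans h11.symm)
  rw [Matrix.det_fin_two, e01, e10, e] at hdet
  have hsq' : A 1 1 * A 1 1 = 1 := by rw [mul_zero, sub_zero] at hdet; exact hdet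
  have : A 1 1 = 1 ∨ A 1 1 = -1 := by
    rcases mul_self_eq_one_iff.mp hsq' with h | h
    · exact Or.inl h
    · exact Or.inr h
  rcases this with h1 | h1
  · left; ext i j; fin_cases i <;> fin_cases j <;>
      simp [Matrix.one_apply, e01, e10, e, h1]
  · right; ext i j; fin_cases i <;> fin_cases j <;>
      simp [Matrix.one_apply, e01, e10, e, h1]

local notation "SU2" => Matrix.specialUnitaryGroup (Fin 2) ℂ

lemma negone_mem : (-1 : Matrix (Fin 2) (Fin 2) ℂ) ∈ Matrix.specialUnitaryGroup (Fin 2) ℂ := by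
  rw [Matrix.mem_specialUnitaryGroup_iff]
  constructor
  · rw [Matrix.mem_unitaryGroup_iff]; simp
  · simp [Matrix.det_neg]

noncomputable def nSU : Matrix.specialUnitaryGroup (Fin 2) ℂ := ⟨-1, negone_mem⟩

lemma keysub (g : Matrix.specialUnitaryGroup (Fin 2) ℂ) (hg : g * g = 1) :
    g = 1 ∨ g = nSU := by
  have hd : (g : Matrix (Fin 2) (Fin 2) ℂ).det = 1 :=
    (Matrix.mem_specialUnitaryGroup_iff.mp g.2).2
  have hsq : (g : Matrix (Fin 2) (Fin 2) ℂ) * g = 1 := by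
    have := congrArg Subtype.val hg
    simpa using this
  rcases key g.1 hd hsq with h | h
  · exact Or.inl (Subtype.ext h)
  · exact Or.inr (Subtype.ext h)

lemma nSU_ne_one : nSU ≠ 1 := by
  intro h
  have := congrArg (fun g : Matrix.specialUnitaryGroup (Fin 2) ℂ =>
    (g : Matrix (Fin 2) (Fin 2) ℂ) 0 0) h
  simp [nSU, Matrix.one_apply] at this
  norm_num at this

lemma orderOf_nSU : orderOf nSU = 2 := by
  have : Fact (Nat.Prime 2) := ⟨Nat.prime_two⟩
  refine orderOf_eq_prime ?_ nSU_ne_one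
  apply Subtype.ext
  show ((nSU ^ 2 : Matrix.specialUnitaryGroup (Fin 2) ℂ) : Matrix (Fin 2) (Fin 2) ℂ) = 1
  rw [SubmonoidClass.coe_pow]
  show (-1 : Matrix (Fin 2) (Fin 2) ℂ) ^ 2 = 1
  simp

lemma order_two_iff (g : Matrix.specialUnitaryGroup (Fin 2) ℂ) :
    (g : Matrix (Fin 2) (Fin 2) ℂ) = -1 ↔ orderOf g = 2 := by
  constructor
  · intro h
    have : g = nSU := Subtype.ext h
    rw [this]; exact orderOf_nSU
  · intro h
    have hsq : g * g = 1 := by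
      have := pow_orderOf_eq_one g
      rwa [h, pow_two] at this
    rcases keysub g hsq with h1 | h1
    · exfalso; rw [h1, orderOf_one] at h; norm_num at h
    · rw [h1]; rfl

/-- A finite subgroup `G ≤ SU(2,ℂ)` of even order contains `-I`, `-I` is its
unique element of order 2, and `{I, -I}` is its unique subgroup of order 2. -/
theorem neg_one_unique_involution_in_even_order_SU2_subgroup
    (G : Subgroup (Matrix.specialUnitaryGroup (Fin 2) ℂ)) [Finite G]
    (heven : Even (Nat.card G)) :
    (∃ g ∈ G, (g : Matrix (Fin 2) (Fin 2) ℂ) = -1) ∧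
    (∀ g ∈ G, ((g : Matrix (Fin 2) (Fin 2) ℂ) = -1 ↔ orderOf g = 2)) ∧
    (∃! H : Subgroup (Matrix.specialUnitaryGroup (Fin 2) ℂ),
      H ≤ G ∧ Nat.card H = 2) ∧
    (∀ H : Subgroup (Matrix.specialUnitaryGroup (Fin 2) ℂ),
      H ≤ G → Nat.card H = 2 →
      ∀ h ∈ H, (h : Matrix (Fin 2) (Fin 2) ℂ) = 1 ∨
        (h : Matrix (Fin 2) (Fin 2) ℂ) = -1) := by

  have h2 : (2 : ℕ).Prime := Nat.prime_two
  -- existence of -1 in G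
  obtain ⟨x, hx⟩ := exists_prime_orderOf_dvd_card' (G := G) 2 (heven.two_dvd)
  have hxo : orderOf (x : Matrix.specialUnitaryGroup (Fin 2) ℂ) = 2 :=
    (Subgroup.orderOf_coe x).trans hx
  have hxneg : ((x : Matrix.specialUnitaryGroup (Fin 2) ℂ) : Matrix (Fin 2) (Fin 2) ℂ) = -1 :=
    (order_two_iff _).mpr hxo
  have hnG : nSU ∈ G := by
    have : (x : Matrix.specialUnitaryGroup (Fin 2) ℂ) = nSU := Subtype.ext hxneg
    rw [← this]; exact x.2
  have hdich : ∀ H : Subgroup (Matrix.specialUnitaryGroup (Fin 2) ℂ),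
      H ≤ G → Nat.card H = 2 → ∀ h ∈ H, h = 1 ∨ h = nSU := by
    intro H hHG hH h hh
    have hdvd : orderOf h ∣ 2 := by
      rw [← Subgroup.orderOf_mk (H := H) h hh]
      simpa only [hH] using orderOf_dvd_natCard (⟨h, hh⟩ : H)
    rcases (Nat.Prime.eq_one_or_self_of_dvd h2 _ hdvd) with h1 | h1
    · left; exact orderOf_eq_one_iff.mp h1
    · right; exact Subtype.ext ((order_two_iff h).mpr h1)
  refine ⟨⟨nSU, hnG, rfl⟩, fun g _ => order_two_iff g, ?_, ?_⟩
  · -- unique subgroup of order 2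
    refine ⟨Subgroup.zpowers nSU, ⟨Subgroup.zpowers_le.mpr hnG, by
      rw [Nat.card_zpowers, orderOf_nSU]⟩, ?_⟩
    rintro H ⟨hHG, hH⟩
    have hfin : Finite H := Nat.finite_of_card_ne_zero (by rw [hH]; norm_num)
    have hnt : Nontrivial H := by
      apply Finite.one_lt_card_iff_nontrivial.mp
      rw [hH]; norm_num
    obtain ⟨y, hy⟩ := exists_ne (1 : H)
    have hy1 : (y : Matrix.specialUnitaryGroup (Fin 2) ℂ) ≠ 1 := by
      intro h; exact hy (Subtype.ext h)
    have hyn : (y : Matrix.specialUnitaryGroup (Fin 2) ℂ) = nSU :=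
      ((hdich H hHG hH y y.2).resolve_left hy1)
    have hnH : nSU ∈ H := hyn ▸ y.2
    apply le_antisymm
    · intro h hh
      rcases hdich H hHG hH h hh with h1 | h1
      · rw [h1]; exact Subgroup.one_mem _
      · rw [h1]; exact Subgroup.mem_zpowers _
    · exact Subgroup.zpowers_le.mpr hnH
  · intro H hHG hH h hh
    rcases hdich H hHG hH h hh with h1 | h1
    · exact Or.inl (congrArg Subtype.val h1)
    · exact Or.inr (congrArg Subtype.val h1)
end
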